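/- Let I be a nonempty countable index set, let p : I → ℝ satisfy p_n > 0 for all n, let p be summable with ∑_n p_n = 1, and let s : I → ℝ be such that (2^(−s_n))_{n∈I} is summable with ∑_n 2^(−s_n) ≤ 1. Define the entropy S : I → ℝ by S_n = −log p_n / log 2 (so that p_n = 2^(−S_n)). If (p_n s_n)_{n∈I} and (p_n S_n)_{n∈I} are summable, then ∑_n p_n S_n ≤ ∑_n p_n s_n, and equality holds if and only if s_n = S_n for all n ∈ I. -/

import Mathlib

/-- The entropy `S n = -log₂ (p n)` is the unique optimal decision strategy:
for any strategy `s` satisfying the Kraft inequality `∑ 2^(-s n) ≤ 1`, the expected number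
of questions `∑ p n * s n` is at least `∑ p n * S n`, with equality iff `s = S`. -/
theorem entropy_is_unique_optimal_decision_strategy
    {I : Type*} [Countable I] [Nonempty I]
    (p s S : I → ℝ)
    (hp : ∀ n, 0 < p n)
    (hpsum : Summable p) (hp1 : ∑' n, p n = 1)
    (hssum : Summable fun n => (2 : ℝ) ^ (-s n))
    (hs1 : ∑' n, (2 : ℝ) ^ (-s n) ≤ 1)
    (hS : ∀ n, S n = -Real.log (p n) / Real.log 2)
    (hpssum : Summable fun n => p n * s n)
    (hpSsum : Summable fun n => p n * S n) :
    (∑' n, p n * S n ≤ ∑' n, p n * s n) ∧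
      ((∑' n, p n * S n = ∑' n, p n * s n) ↔ ∀ n, s n = S n) := by
  have hc : (0:ℝ) < Real.log 2 := Real.log_pos (by norm_num)
  set q : I → ℝ := fun n => (2:ℝ) ^ (-s n) with hqdef
  have hq0 : ∀ n, 0 < q n := fun n => Real.rpow_pos_of_pos (by norm_num) _
  have hlogq : ∀ n, Real.log (q n) = -s n * Real.log 2 := fun n =>
    Real.log_rpow (by norm_num) _
  have hlogp : ∀ n, Real.log (p n) = -S n * Real.log 2 := by
    intro n
    rw [hS n]
    field_simp
  -- the KL-divergence-like term
  set D : I → ℝ := fun n => p n * (Real.log (p n) - Real.log (q n)) with hDdef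
  have hD : ∀ n, p n * s n - p n * S n = D n / Real.log 2 := by
    intro n
    simp only [hDdef, hlogp n, hlogq n]
    field_simp
    ring
  -- pointwise inequality: D n ≥ p n - q n, equality iff q n = p n
  have key : ∀ n, 0 ≤ D n - (p n - q n) ∧ (D n - (p n - q n) = 0 → q n = p n) := by
    intro n
    have hexp : q n = p n * Real.exp (Real.log (q n) - Real.log (p n)) := by
      rw [Real.exp_sub, Real.exp_log (hq0 n), Real.exp_log (hp n), mul_comm,
        div_mul_cancel₀ _ (ne_of_gt (hp n))]
    set t := Real.log (q n) - Real.log (p n) with htdef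
    have hle : t + 1 ≤ Real.exp t := Real.add_one_le_exp t
    have hDn : D n - (p n - q n) = p n * (Real.exp t - t - 1) := by
      have h1 : D n = p n * (-t) := by simp only [hDdef, htdef]; ring
      rw [h1, hexp]; ring
    constructor
    · rw [hDn]; nlinarith [hp n]
    · intro h0
      rw [hDn] at h0
      have hexpt : Real.exp t = t + 1 := by nlinarith [hp n]
      have ht0 : t = 0 := by
        by_contra hne
        have := Real.add_one_lt_exp hne
        linarith
      have : Real.log (q n) = Real.log (p n) := by
        have := htdef ▸ ht0; linarith [sub_eq_zero.mp this]
      calc q n = Real.exp (Real.log (q n)) := (Real.exp_log (hq0 n)).symm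
        _ = Real.exp (Real.log (p n)) := by rw [this]
        _ = p n := Real.exp_log (hp n)
  -- summability facts
  have hDsum : Summable D := by
    have : Summable fun n => (p n * s n - p n * S n) * Real.log 2 :=
      (hpssum.sub hpSsum).mul_right _
    refine this.congr fun n => ?_
    rw [hD n]
    field_simp
  have hpqsum : Summable fun n => p n - q n := hpsum.sub hssum
  have hhsum : Summable fun n => D n - (p n - q n) := hDsum.sub hpqsum
  -- sum of D is nonnegative
  have htpq : ∑' n, (p n - q n) = 1 - ∑' n, q n := by
    rw [Summable.tsum_sub hpsum hssum, hp1]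
  have hpq_nonneg : 0 ≤ ∑' n, (p n - q n) := by rw [htpq]; linarith [hs1]
  have hh_nonneg : 0 ≤ ∑' n, (D n - (p n - q n)) :=
    tsum_nonneg fun n => (key n).1
  have hDsplit : ∑' n, D n = (∑' n, (D n - (p n - q n))) + ∑' n, (p n - q n) := by
    rw [← Summable.tsum_add hhsum hpqsum]
    exact tsum_congr fun n => by ring
  have hDnonneg : 0 ≤ ∑' n, D n := by rw [hDsplit]; linarith
  -- the difference of the expectations
  have hdiff : ∑' n, p n * s n - ∑' n, p n * S n = (∑' n, D n) / Real.log 2 := by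
    rw [← Summable.tsum_sub hpssum hpSsum, ← tsum_div_const]
    exact tsum_congr fun n => hD n
  have hmain : ∑' n, p n * S n ≤ ∑' n, p n * s n := by
    have : 0 ≤ (∑' n, D n) / Real.log 2 := div_nonneg hDnonneg hc.le
    linarith [hdiff]
  refine ⟨hmain, ?_, ?_⟩
  · intro heq
    have hD0 : ∑' n, D n = 0 := by
      have : (∑' n, D n) / Real.log 2 = 0 := by linarith [hdiff]
      field_simp at this
      simpa using this
    have hh0 : ∑' n, (D n - (p n - q n)) = 0 := by
      rw [hDsplit] at hD0; linarith
    intro n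
    have hn0 : D n - (p n - q n) = 0 := by
      have hle' : D n - (p n - q n) ≤ ∑' m, (D m - (p m - q m)) :=
        Summable.le_tsum hhsum n fun m _ => (key m).1
      have := (key n).1
      linarith
    have hqp : q n = p n := (key n).2 hn0
    have : -s n * Real.log 2 = -S n * Real.log 2 := by
      rw [← hlogq n, ← hlogp n, hqp]
    have := mul_right_cancel₀ (ne_of_gt hc) this
    linarith
  · intro h
    exact tsum_congr fun n => by rw [h n]
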